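/- The coefficient of the monomial (x_0 x_1 ··· x_{n-1})^{n-1} in the square of the Vandermonde product ∏_{0 ≤ i < j ≤ n-1} (x_j − x_i) equals (−1)^(n(n-1)/2) · n!. -/

import Mathlib

open Equiv Equiv.Perm Finset MvPolynomial

noncomputable def expOf {n : ℕ} (σ : Perm (Fin n)) : Fin n →₀ ℕ :=
  Finsupp.equivFunOnFinite.symm fun k => ((σ.symm k : Fin n) : ℕ)

lemma prod_X_pow_finsupp {n : ℕ} (f : Fin n →₀ ℕ) :
    ∏ k, (X k : MvPolynomial (Fin n) ℤ) ^ f k = monomial f 1 := by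
  rw [← MvPolynomial.prod_X_pow_eq_monomial]
  exact (Finset.prod_subset (Finset.subset_univ _) (fun x _ hx => by
    simp [Finsupp.notMem_support_iff.mp hx])).symm

lemma monomial_of_perm {n : ℕ} (σ : Perm (Fin n)) :
    ∏ i : Fin n, (X (σ i) : MvPolynomial (Fin n) ℤ) ^ (i : ℕ) = monomial (expOf σ) 1 := by
  rw [← Equiv.prod_comp σ.symm (fun i => (X (σ i) : MvPolynomial (Fin n) ℤ) ^ (i : ℕ))]
  simp_rw [Equiv.apply_symm_apply]
  rw [← prod_X_pow_finsupp (expOf σ)]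
  refine Finset.prod_congr rfl fun k _ => ?_
  simp [expOf]

lemma expOf_add_eq {n : ℕ} (σ τ : Perm (Fin n)) :
    expOf σ + expOf τ = Finsupp.equivFunOnFinite.symm (fun _ : Fin n => n - 1) ↔
      τ = σ * Fin.revPerm := by
  constructor
  · intro h
    have h' : ∀ k, ((σ.symm k : Fin n) : ℕ) + ((τ.symm k : Fin n) : ℕ) = n - 1 := by
      intro k
      have := DFunLike.congr_fun h k
      simpa [expOf] using this
    have hτ : ∀ k, τ.symm k = Fin.rev (σ.symm k) := fun k =>
      Fin.ext (by rw [Fin.val_rev]; have := (σ.symm k).isLt; have := h' k; omega)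
    refine Equiv.ext fun x => ?_
    have hx := hτ (σ (Fin.rev x))
    rw [Equiv.symm_apply_apply, Fin.rev_rev] at hx
    calc τ x = τ (τ.symm (σ (Fin.rev x))) := by rw [hx]
      _ = σ (Fin.rev x) := τ.apply_symm_apply _
      _ = (σ * Fin.revPerm : Perm (Fin n)) x := rfl
  · rintro rfl
    ext k
    have h1 : ((σ * Fin.revPerm).symm : Fin n → Fin n) k = Fin.rev (σ.symm k) := rfl
    simp only [Finsupp.add_apply, expOf, Finsupp.equivFunOnFinite_symm_apply_apply, h1,
      Fin.val_rev]
    have := (σ.symm k).isLt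
    omega

lemma rev_succ_succ (m : ℕ) :
    (Fin.revPerm : Perm (Fin (m + 2))) =
      Equiv.Perm.decomposeFin.symm (Fin.last (m + 1), Fin.revPerm * finRotate (m + 1)) := by
  ext i
  refine Fin.cases ?_ (fun x => ?_) i
  · simp [Fin.rev_zero]
  · rw [Equiv.Perm.decomposeFin_symm_apply_succ]
    rcases eq_or_ne x (Fin.last m) with h | h
    · subst h
      simp [Perm.mul_apply, finRotate_last, Fin.rev_zero, Fin.succ_last, Fin.rev_last,
        swap_apply_right]
    · have hxv : (x : ℕ) < m := Fin.val_lt_last h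
      have hy : (((Fin.revPerm * finRotate (m + 1) : Perm (Fin (m + 1))) x).succ : ℕ)
          = m - (x : ℕ) := by
        simp only [Fin.val_succ, Perm.mul_apply, Fin.revPerm_apply, Fin.val_rev,
          coe_finRotate_of_ne_last h]
        omega
      rw [swap_apply_of_ne_of_ne]
      · rw [hy, Fin.revPerm_apply, Fin.val_rev, Fin.val_succ]
        omega
      · intro hc
        rw [hc, Fin.val_zero] at hy
        omega
      · intro hc
        rw [hc, Fin.val_last] at hy
        omega

lemma sign_revPerm_eq (n : ℕ) :
    Equiv.Perm.sign (Fin.revPerm : Perm (Fin n)) = (-1) ^ n.choose 2 := by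
  induction n with
  | zero => simp [Subsingleton.elim (Fin.revPerm : Perm (Fin 0)) 1]
  | succ n ih =>
    cases n with
    | zero => simp [Subsingleton.elim (Fin.revPerm : Perm (Fin 1)) 1]
    | succ m =>
      rw [rev_succ_succ, Equiv.Perm.decomposeFin.symm_sign, if_neg (Fin.last_pos).ne',
        map_mul, ih, sign_finRotate]
      have h1 : (m + 2).choose 2 = (m + 1).choose 2 + (m + 1) := by
        simp [Nat.choose_succ_succ (m+1) 1, Nat.choose_one_right]; omega
      rw [h1, pow_add]
      simp [pow_add, pow_succ, mul_comm, mul_left_comm, mul_assoc]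

theorem coeff_vandermonde_sq (n : ℕ) :
    MvPolynomial.coeff (Finsupp.equivFunOnFinite.symm fun _ : Fin n => n - 1)
        ((∏ p ∈ Finset.univ.filter (fun p : Fin n × Fin n => p.1 < p.2),
            (MvPolynomial.X p.2 - MvPolynomial.X p.1 : MvPolynomial (Fin n) ℤ)) ^ 2) =
      (-1) ^ n.choose 2 * (n.factorial : ℤ) := by
  have hv : (∏ p ∈ Finset.univ.filter (fun p : Fin n × Fin n => p.1 < p.2),
        (MvPolynomial.X p.2 - MvPolynomial.X p.1 : MvPolynomial (Fin n) ℤ)) =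
      ∑ σ : Perm (Fin n), Equiv.Perm.sign σ • (monomial (expOf σ) (1 : ℤ)) := by
    have h0 : (∏ p ∈ Finset.univ.filter (fun p : Fin n × Fin n => p.1 < p.2),
        (MvPolynomial.X p.2 - MvPolynomial.X p.1 : MvPolynomial (Fin n) ℤ)) =
        (Matrix.vandermonde fun i : Fin n => (X i : MvPolynomial (Fin n) ℤ)).det := by
      rw [Matrix.det_vandermonde, Finset.prod_sigma']
      refine Finset.prod_nbij' (fun p => ⟨p.1, p.2⟩) (fun x => (x.1, x.2)) ?_ ?_ ?_ ?_ ?_ <;>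
        simp [Finset.mem_sigma, Finset.mem_Ioi]
    rw [h0, Matrix.det_apply]
    refine Finset.sum_congr rfl fun σ _ => ?_
    rw [← monomial_of_perm]
    congr 1
  rw [sq, hv, Finset.sum_mul_sum]
  simp_rw [coeff_sum, smul_mul_smul_comm, monomial_mul, mul_one, coeff_smul, coeff_monomial,
    expOf_add_eq]
  have hτsum : ∀ σ : Perm (Fin n),
      (∑ τ : Perm (Fin n), (Equiv.Perm.sign σ * Equiv.Perm.sign τ) •
        (if τ = σ * Fin.revPerm then (1 : ℤ) else 0))
        = ((Equiv.Perm.sign (Fin.revPerm : Perm (Fin n)) : ℤˣ) : ℤ) := by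
    intro σ
    rw [Finset.sum_eq_single (σ * Fin.revPerm)]
    · rw [if_pos rfl, map_mul, ← mul_assoc, Int.units_mul_self, one_mul, Units.smul_def,
        smul_eq_mul, mul_one]
    · intro τ _ hne
      rw [if_neg hne, smul_zero]
    · intro h
      exact absurd (Finset.mem_univ _) h
  simp_rw [hτsum]
  rw [Finset.sum_const, Finset.card_univ, Fintype.card_perm, Fintype.card_fin, sign_revPerm_eq,
    nsmul_eq_mul]
  push_cast
  ring
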